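/- The variational identity implies the PAP differential identity: let λ_{iμ} be a continuously differentiable tetrad on ℝⁿ, b a real parameter, E^μ_ν a differentiable mixed tensor field, and define J_i^μ := −E^μ_α λ_i^α. Suppose that at every point and for every ν the identity E^μ_{ν∥⁻μ} + λ_{iμ∥⁺ν} J_i^μ = 0 holds (summation over i and μ), where E^μ_{ν∥⁻μ} := ∂_μ E^μ_ν − E^μ_α ∇^α_{μν} + E^α_ν ∇^μ_{μα} and λ_{iμ∥⁺ν} := ∂_ν λ_{iμ} − λ_{iα} ∇^α_{μν}. Then at every point and for every ν one has E^μ_{ν∥⁻μ} = (b − 1) E^{μα} γ_{μαν} (summation over μ and α), where E^{μα} = E^μ_β g^{βα} and γ_{μαν} = g_{μβ} γ^β_{αν}. -/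

import Mathlib

open scoped BigOperators

noncomputable section

/-- A point of ℝⁿ. -/
abbrev Pt (n : ℕ) := Fin n → ℝ
/-- A field of doubly-indexed components, e.g. a metric `g x μ ν` or a mixed tensor `E x μ ν`. -/
abbrev Tensor2 (n : ℕ) := Pt n → Fin n → Fin n → ℝ
/-- A field of connection coefficients `N x α μ ν = N^α_{μν}`. -/
abbrev Conn (n : ℕ) := Pt n → Fin n → Fin n → Fin n → ℝ

/-- Partial derivative `∂_μ f` at `x`. -/
noncomputable def pd {n : ℕ} (f : Pt n → ℝ) (μ : Fin n) (x : Pt n) : ℝ :=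
  fderiv ℝ f x (Pi.single μ 1)

/-- Christoffel symbols `{^α_{μν}} = (1/2) g^{ασ}(∂_ν g_{μσ} + ∂_μ g_{νσ} − ∂_σ g_{μν})`. -/
noncomputable def christoffel {n : ℕ} (g ginv : Tensor2 n) : Conn n := fun x α μ ν =>
  (1/2) * ∑ σ, ginv x α σ *
    (pd (fun y => g y μ σ) ν x + pd (fun y => g y ν σ) μ x - pd (fun y => g y μ ν) σ x)

/-- Contracted covariant derivative of `E` with respect to the dual (transposed) connection of `N`:
`E^μ_{ν∘μ} = ∂_μ E^μ_ν − E^μ_α N^α_{μν} + E^α_ν N^μ_{μα}` (summed over `μ` and `α`). -/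
noncomputable def covDivDual {n : ℕ} (N : Conn n) (E : Tensor2 n) (ν : Fin n) (x : Pt n) : ℝ :=
  (∑ μ, pd (fun y => E y μ ν) μ x)
    - (∑ μ, ∑ α, E x μ α * N x α μ ν)
    + (∑ μ, ∑ α, E x α ν * N x μ μ α)

/-- The metric `g_{μν} = λ_{iμ} λ_{iν}` associated with a tetrad `lam x i μ = λ_{iμ}`. -/
noncomputable def tetMetric {n : ℕ} (lam : Pt n → Fin n → Fin n → ℝ) : Tensor2 n :=
  fun x μ ν => ∑ i, lam x i μ * lam x i ν

/-- The inverse metric `g^{μν} = λ_i^μ λ_i^ν` built from the inverse tetrad `laminv x i μ = λ_i^μ`. -/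
noncomputable def tetMetricInv {n : ℕ} (laminv : Pt n → Fin n → Fin n → ℝ) : Tensor2 n :=
  fun x μ ν => ∑ i, laminv x i μ * laminv x i ν

/-- The Weitzenböck connection `Γ^α_{μν} = λ_i^α ∂_ν λ_{iμ}`. -/
noncomputable def weitzenbock {n : ℕ} (lam laminv : Pt n → Fin n → Fin n → ℝ) : Conn n :=
  fun x α μ ν => ∑ i, laminv x i α * pd (fun y => lam y i μ) ν x

/-- The contortion `γ^α_{μν} = Γ^α_{μν} − {^α_{μν}}`. -/
noncomputable def contortion {n : ℕ} (lam laminv : Pt n → Fin n → Fin n → ℝ) : Conn n :=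
  fun x α μ ν => weitzenbock lam laminv x α μ ν
    - christoffel (tetMetric lam) (tetMetricInv laminv) x α μ ν

-- helpers
lemma pd_mul {n : ℕ} (f g : Pt n → ℝ) (x : Pt n) (hf : DifferentiableAt ℝ f x)
    (hg : DifferentiableAt ℝ g x) (μ : Fin n) :
    pd (fun y => f y * g y) μ x = pd f μ x * g x + f x * pd g μ x := by
  unfold pd
  rw [fderiv_fun_mul hf hg]
  simp only [ContinuousLinearMap.add_apply, ContinuousLinearMap.smul_apply, smul_eq_mul]
  ring

lemma pd_sum {n : ℕ} {ι : Type*} (s : Finset ι) (f : ι → Pt n → ℝ) (x : Pt n)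
    (hf : ∀ i ∈ s, DifferentiableAt ℝ (f i) x) (μ : Fin n) :
    pd (fun y => ∑ i ∈ s, f i y) μ x = ∑ i ∈ s, pd (f i) μ x := by
  unfold pd
  rw [fderiv_fun_sum hf]
  simp

lemma sum_comm3 {n : ℕ} (F : Fin n → Fin n → Fin n → ℝ) :
    ∑ β, ∑ i, ∑ j, F β i j = ∑ i, ∑ j, ∑ β, F β i j := by
  rw [Finset.sum_comm]
  exact Finset.sum_congr rfl fun i _ => Finset.sum_comm

section tet
variable {n : ℕ} (lam laminv : Pt n → Fin n → Fin n → ℝ)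

lemma g_symm (x : Pt n) (μ ν : Fin n) : tetMetric lam x μ ν = tetMetric lam x ν μ := by
  simp only [tetMetric]; exact Finset.sum_congr rfl fun i _ => mul_comm _ _

lemma gginv
    (hlam_inv : ∀ x μ ν, (∑ i, lam x i μ * laminv x i ν) = if μ = ν then (1:ℝ) else 0)
    (hlam_inv' : ∀ x i j, (∑ μ, lam x i μ * laminv x j μ) = if i = j then (1:ℝ) else 0)
    (x : Pt n) (μ α : Fin n) :
    (∑ β, tetMetric lam x μ β * tetMetricInv laminv x β α) = if μ = α then (1:ℝ) else 0 := by
  calc ∑ β, tetMetric lam x μ β * tetMetricInv laminv x β α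
      = ∑ β, ∑ i, ∑ j, (lam x i μ * lam x i β) * (laminv x j β * laminv x j α) := by
        refine Finset.sum_congr rfl fun β _ => ?_
        simp only [tetMetric, tetMetricInv]
        rw [Finset.sum_mul_sum]
    _ = ∑ i, ∑ j, ∑ β, (lam x i μ * lam x i β) * (laminv x j β * laminv x j α) := sum_comm3 _
    _ = ∑ i, ∑ j, (lam x i μ * laminv x j α) * ∑ β, lam x i β * laminv x j β := by
        refine Finset.sum_congr rfl fun i _ => Finset.sum_congr rfl fun j _ => ?_
        rw [Finset.mul_sum]; exact Finset.sum_congr rfl fun β _ => by ring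
    _ = ∑ i, lam x i μ * laminv x i α := by
        refine Finset.sum_congr rfl fun i _ => ?_
        simp [hlam_inv', mul_ite, Finset.sum_ite_eq]
    _ = if μ = α then 1 else 0 := hlam_inv x μ α

lemma ginvg
    (hlam_inv : ∀ x μ ν, (∑ i, lam x i μ * laminv x i ν) = if μ = ν then (1:ℝ) else 0)
    (hlam_inv' : ∀ x i j, (∑ μ, lam x i μ * laminv x j μ) = if i = j then (1:ℝ) else 0)
    (x : Pt n) (β β' : Fin n) :
    (∑ α, tetMetricInv laminv x β α * tetMetric lam x α β') = if β = β' then (1:ℝ) else 0 := by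
  have h0 := gginv lam laminv hlam_inv hlam_inv' x β' β
  have h2 : (if β' = β then (1:ℝ) else 0) = if β = β' then (1:ℝ) else 0 := by
    by_cases h : β = β' <;> simp [h, Ne.symm, eq_comm]
  rw [← h2, ← h0]
  refine Eq.symm (Finset.sum_congr rfl fun α _ => ?_)
  rw [g_symm]
  have hinv : tetMetricInv laminv x β α = tetMetricInv laminv x α β := by
    simp only [tetMetricInv]; exact Finset.sum_congr rfl fun i _ => mul_comm _ _
  rw [hinv]; ring

-- partial derivative of the metric
lemma pd_g (hlam_diff : ∀ i μ, ContDiff ℝ 1 (fun x => lam x i μ)) (x : Pt n) (μ σ ν : Fin n) :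
    pd (fun y => tetMetric lam y μ σ) ν x
      = ∑ i, (pd (fun y => lam y i μ) ν x * lam x i σ + lam x i μ * pd (fun y => lam y i σ) ν x) := by
  have h1 : pd (fun y => tetMetric lam y μ σ) ν x
      = ∑ i, pd (fun y => lam y i μ * lam y i σ) ν x := by
    simp only [tetMetric]
    exact pd_sum _ _ x (fun i _ => (((hlam_diff i μ).differentiable one_ne_zero) x).mul
      (((hlam_diff i σ).differentiable one_ne_zero) x)) ν
  rw [h1]
  exact Finset.sum_congr rfl fun i _ => pd_mul _ _ x
    (((hlam_diff i μ).differentiable one_ne_zero) x) (((hlam_diff i σ).differentiable one_ne_zero) x) ν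

-- lowered Weitzenböck connection
lemma gamma_low
    (hlam_inv' : ∀ x i j, (∑ μ, lam x i μ * laminv x j μ) = if i = j then (1:ℝ) else 0)
    (x : Pt n) (σ μ ν : Fin n) :
    (∑ α, tetMetric lam x σ α * weitzenbock lam laminv x α μ ν)
      = ∑ i, lam x i σ * pd (fun y => lam y i μ) ν x := by
  calc ∑ α, tetMetric lam x σ α * weitzenbock lam laminv x α μ ν
      = ∑ α, ∑ i, ∑ j, (lam x i σ * lam x i α) * (laminv x j α * pd (fun y => lam y j μ) ν x) := by
        refine Finset.sum_congr rfl fun α _ => ?_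
        simp only [tetMetric, weitzenbock]
        rw [Finset.sum_mul_sum]
    _ = ∑ i, ∑ j, ∑ α, (lam x i σ * lam x i α) * (laminv x j α * pd (fun y => lam y j μ) ν x) :=
        sum_comm3 _
    _ = ∑ i, ∑ j, (lam x i σ * pd (fun y => lam y j μ) ν x) * ∑ α, lam x i α * laminv x j α := by
        refine Finset.sum_congr rfl fun i _ => Finset.sum_congr rfl fun j _ => ?_
        rw [Finset.mul_sum]; exact Finset.sum_congr rfl fun α _ => by ring
    _ = ∑ i, lam x i σ * pd (fun y => lam y i μ) ν x := by
        refine Finset.sum_congr rfl fun i _ => ?_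
        simp [hlam_inv', mul_ite, Finset.sum_ite_eq]
end tet

section tet2
variable {n : ℕ} (lam laminv : Pt n → Fin n → Fin n → ℝ)

lemma c_low
    (hlam_inv : ∀ x μ ν, (∑ i, lam x i μ * laminv x i ν) = if μ = ν then (1:ℝ) else 0)
    (hlam_inv' : ∀ x i j, (∑ μ, lam x i μ * laminv x j μ) = if i = j then (1:ℝ) else 0)
    (x : Pt n) (σ μ ν : Fin n) :
    (∑ α, tetMetric lam x σ α * christoffel (tetMetric lam) (tetMetricInv laminv) x α μ ν)
      = (1/2) * (pd (fun y => tetMetric lam y μ σ) ν x + pd (fun y => tetMetric lam y ν σ) μ x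
          - pd (fun y => tetMetric lam y μ ν) σ x) := by
  set A : Fin n → ℝ := fun τ => pd (fun y => tetMetric lam y μ τ) ν x
      + pd (fun y => tetMetric lam y ν τ) μ x - pd (fun y => tetMetric lam y μ ν) τ x with hA
  calc ∑ α, tetMetric lam x σ α * christoffel (tetMetric lam) (tetMetricInv laminv) x α μ ν
      = ∑ α, ∑ τ, tetMetric lam x σ α * ((1/2) * (tetMetricInv laminv x α τ * A τ)) := by
        refine Finset.sum_congr rfl fun α _ => ?_
        simp only [christoffel, Finset.mul_sum, hA]
    _ = ∑ τ, ∑ α, tetMetric lam x σ α * ((1/2) * (tetMetricInv laminv x α τ * A τ)) :=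
        Finset.sum_comm
    _ = ∑ τ, ((1/2) * A τ) * ∑ α, tetMetric lam x σ α * tetMetricInv laminv x α τ := by
        refine Finset.sum_congr rfl fun τ _ => ?_
        rw [Finset.mul_sum]; exact Finset.sum_congr rfl fun α _ => by ring
    _ = (1/2) * A σ := by
        simp [gginv lam laminv hlam_inv hlam_inv', mul_ite, Finset.sum_ite_eq]

lemma pd_g_swap (x : Pt n) (μ ν τ : Fin n) :
    pd (fun y => tetMetric lam y μ ν) τ x = pd (fun y => tetMetric lam y ν μ) τ x := by
  congr 1; funext y; exact g_symm lam y μ ν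

lemma c_low_sym
    (hlam_inv : ∀ x μ ν, (∑ i, lam x i μ * laminv x i ν) = if μ = ν then (1:ℝ) else 0)
    (hlam_inv' : ∀ x i j, (∑ μ, lam x i μ * laminv x j μ) = if i = j then (1:ℝ) else 0)
    (x : Pt n) (σ μ ν : Fin n) :
    (∑ α, tetMetric lam x σ α * christoffel (tetMetric lam) (tetMetricInv laminv) x α μ ν)
      + (∑ α, tetMetric lam x μ α * christoffel (tetMetric lam) (tetMetricInv laminv) x α σ ν)
      = pd (fun y => tetMetric lam y μ σ) ν x := by
  rw [c_low lam laminv hlam_inv hlam_inv' x σ μ ν, c_low lam laminv hlam_inv hlam_inv' x μ σ ν]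
  rw [pd_g_swap lam x σ μ ν, pd_g_swap lam x ν μ σ, pd_g_swap lam x σ ν μ]
  ring

lemma gamma_antisym
    (hlam_diff : ∀ i μ, ContDiff ℝ 1 (fun x => lam x i μ))
    (hlam_inv : ∀ x μ ν, (∑ i, lam x i μ * laminv x i ν) = if μ = ν then (1:ℝ) else 0)
    (hlam_inv' : ∀ x i j, (∑ μ, lam x i μ * laminv x j μ) = if i = j then (1:ℝ) else 0)
    (x : Pt n) (σ μ ν : Fin n) :
    (∑ α, tetMetric lam x σ α * contortion lam laminv x α μ ν)
      + (∑ α, tetMetric lam x μ α * contortion lam laminv x α σ ν) = 0 := by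
  have expand : ∀ σ' μ' : Fin n, (∑ α, tetMetric lam x σ' α * contortion lam laminv x α μ' ν)
      = (∑ α, tetMetric lam x σ' α * weitzenbock lam laminv x α μ' ν)
        - (∑ α, tetMetric lam x σ' α * christoffel (tetMetric lam) (tetMetricInv laminv) x α μ' ν) := by
    intro σ' μ'
    rw [← Finset.sum_sub_distrib]
    refine Finset.sum_congr rfl fun α _ => ?_
    simp only [contortion]; ring
  rw [expand σ μ, expand μ σ,
    gamma_low lam laminv hlam_inv' x σ μ ν, gamma_low lam laminv hlam_inv' x μ σ ν]
  have hpd := pd_g lam hlam_diff x μ σ ν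
  rw [Finset.sum_add_distrib] at hpd
  have hcs := c_low_sym lam laminv hlam_inv hlam_inv' x σ μ ν
  rw [hpd] at hcs
  have h1 : (∑ i, pd (fun y => lam y i μ) ν x * lam x i σ)
      = ∑ i, lam x i σ * pd (fun y => lam y i μ) ν x :=
    Finset.sum_congr rfl fun i _ => mul_comm _ _
  rw [h1] at hcs
  linarith

lemma raise
    (hlam_diff : ∀ i μ, ContDiff ℝ 1 (fun x => lam x i μ))
    (hlam_inv : ∀ x μ ν, (∑ i, lam x i μ * laminv x i ν) = if μ = ν then (1:ℝ) else 0)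
    (hlam_inv' : ∀ x i j, (∑ μ, lam x i μ * laminv x j μ) = if i = j then (1:ℝ) else 0)
    (x : Pt n) (β μ ν : Fin n) :
    (∑ α, tetMetricInv laminv x β α * (∑ β', tetMetric lam x μ β' * contortion lam laminv x β' α ν))
      = - contortion lam laminv x β μ ν := by
  have hin : ∀ α, (∑ β', tetMetric lam x μ β' * contortion lam laminv x β' α ν)
      = - ∑ β', tetMetric lam x α β' * contortion lam laminv x β' μ ν := by
    intro α
    have := gamma_antisym lam laminv hlam_diff hlam_inv hlam_inv' x α μ ν
    linarith
  calc (∑ α, tetMetricInv laminv x β α * (∑ β', tetMetric lam x μ β' * contortion lam laminv x β' α ν))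
      = ∑ α, ∑ β', -(tetMetricInv laminv x β α * (tetMetric lam x α β' * contortion lam laminv x β' μ ν)) := by
        refine Finset.sum_congr rfl fun α _ => ?_
        rw [hin α, mul_neg, Finset.mul_sum, ← Finset.sum_neg_distrib]
    _ = ∑ β', ∑ α, -(tetMetricInv laminv x β α * (tetMetric lam x α β' * contortion lam laminv x β' μ ν)) :=
        Finset.sum_comm
    _ = ∑ β', -(contortion lam laminv x β' μ ν * ∑ α, tetMetricInv laminv x β α * tetMetric lam x α β') := by
        refine Finset.sum_congr rfl fun β' _ => ?_
        rw [Finset.mul_sum, ← Finset.sum_neg_distrib]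
        exact Finset.sum_congr rfl fun α _ => by ring
    _ = - contortion lam laminv x β μ ν := by
        simp [ginvg lam laminv hlam_inv hlam_inv', mul_ite, Finset.sum_ite_eq]
end tet2

section main
variable {n : ℕ} (lam laminv : Pt n → Fin n → Fin n → ℝ)

lemma S_eq
    (hlam_inv : ∀ x μ ν, (∑ i, lam x i μ * laminv x i ν) = if μ = ν then (1:ℝ) else 0)
    (hlam_inv' : ∀ x i j, (∑ μ, lam x i μ * laminv x j μ) = if i = j then (1:ℝ) else 0)
    (b : ℝ) (E : Tensor2 n) (x : Pt n) (ν : Fin n) :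
    (∑ i, ∑ μ,
        (pd (fun y => lam y i μ) ν x
          - ∑ α, lam x i α *
              (christoffel (tetMetric lam) (tetMetricInv laminv) x α μ ν
                + b * contortion lam laminv x α μ ν))
        * (-(∑ α, E x μ α * laminv x i α)))
      = (b - 1) * ∑ μ, ∑ α, E x μ α * contortion lam laminv x α μ ν := by
  set Cn : Fin n → Fin n → ℝ := fun α μ =>
    christoffel (tetMetric lam) (tetMetricInv laminv) x α μ ν
      + b * contortion lam laminv x α μ ν with hCn
  calc (∑ i, ∑ μ, (pd (fun y => lam y i μ) ν x - ∑ α, lam x i α * Cn α μ)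
          * (-(∑ α, E x μ α * laminv x i α)))
      = ∑ μ, ∑ i, (pd (fun y => lam y i μ) ν x - ∑ α, lam x i α * Cn α μ)
          * (-(∑ α, E x μ α * laminv x i α)) := Finset.sum_comm
    _ = ∑ μ, ((∑ i, (∑ α, lam x i α * Cn α μ) * (∑ β, E x μ β * laminv x i β))
          - (∑ i, pd (fun y => lam y i μ) ν x * (∑ β, E x μ β * laminv x i β))) := by
        refine Finset.sum_congr rfl fun μ _ => ?_
        rw [← Finset.sum_sub_distrib]
        exact Finset.sum_congr rfl fun i _ => by ring
    _ = ∑ μ, ((∑ α, E x μ α * Cn α μ) - (∑ β, E x μ β * weitzenbock lam laminv x β μ ν)) := by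
        refine Finset.sum_congr rfl fun μ _ => ?_
        have hT1 : (∑ i, pd (fun y => lam y i μ) ν x * (∑ β, E x μ β * laminv x i β))
            = ∑ β, E x μ β * weitzenbock lam laminv x β μ ν := by
          calc (∑ i, pd (fun y => lam y i μ) ν x * (∑ β, E x μ β * laminv x i β))
              = ∑ i, ∑ β, E x μ β * (laminv x i β * pd (fun y => lam y i μ) ν x) := by
                refine Finset.sum_congr rfl fun i _ => ?_
                rw [Finset.mul_sum]
                exact Finset.sum_congr rfl fun β _ => by ring
            _ = ∑ β, ∑ i, E x μ β * (laminv x i β * pd (fun y => lam y i μ) ν x) :=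
                Finset.sum_comm
            _ = ∑ β, E x μ β * weitzenbock lam laminv x β μ ν := by
                refine Finset.sum_congr rfl fun β _ => ?_
                rw [← Finset.mul_sum]
                simp only [weitzenbock]
        have hT2 : (∑ i, (∑ α, lam x i α * Cn α μ) * (∑ β, E x μ β * laminv x i β))
            = ∑ α, E x μ α * Cn α μ := by
          calc (∑ i, (∑ α, lam x i α * Cn α μ) * (∑ β, E x μ β * laminv x i β))
              = ∑ i, ∑ α, ∑ β, (lam x i α * Cn α μ) * (E x μ β * laminv x i β) := by
                refine Finset.sum_congr rfl fun i _ => ?_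
                rw [Finset.sum_mul_sum]
            _ = ∑ α, ∑ β, ∑ i, (lam x i α * Cn α μ) * (E x μ β * laminv x i β) := sum_comm3 _
            _ = ∑ α, ∑ β, (Cn α μ * E x μ β) * ∑ i, lam x i α * laminv x i β := by
                refine Finset.sum_congr rfl fun α _ => Finset.sum_congr rfl fun β _ => ?_
                rw [Finset.mul_sum]
                exact Finset.sum_congr rfl fun i _ => by ring
            _ = ∑ α, Cn α μ * E x μ α := by
                refine Finset.sum_congr rfl fun α _ => ?_
                simp [hlam_inv, mul_ite, Finset.sum_ite_eq]
            _ = ∑ α, E x μ α * Cn α μ :=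
                Finset.sum_congr rfl fun α _ => mul_comm _ _
        rw [hT1, hT2]
    _ = ∑ μ, ∑ α, E x μ α * ((b - 1) * contortion lam laminv x α μ ν) := by
        refine Finset.sum_congr rfl fun μ _ => ?_
        rw [← Finset.sum_sub_distrib]
        refine Finset.sum_congr rfl fun α _ => ?_
        simp only [hCn, contortion]
        ring
    _ = (b - 1) * ∑ μ, ∑ α, E x μ α * contortion lam laminv x α μ ν := by
        rw [Finset.mul_sum]
        refine Finset.sum_congr rfl fun μ _ => ?_
        rw [Finset.mul_sum]
        exact Finset.sum_congr rfl fun α _ => by ring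

lemma T_eq
    (hlam_diff : ∀ i μ, ContDiff ℝ 1 (fun x => lam x i μ))
    (hlam_inv : ∀ x μ ν, (∑ i, lam x i μ * laminv x i ν) = if μ = ν then (1:ℝ) else 0)
    (hlam_inv' : ∀ x i j, (∑ μ, lam x i μ * laminv x j μ) = if i = j then (1:ℝ) else 0)
    (E : Tensor2 n) (x : Pt n) (ν : Fin n) :
    (∑ μ, ∑ α, (∑ β, E x μ β * tetMetricInv laminv x β α)
        * (∑ β, tetMetric lam x μ β * contortion lam laminv x β α ν))
      = - ∑ μ, ∑ β, E x μ β * contortion lam laminv x β μ ν := by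
  rw [← Finset.sum_neg_distrib]
  refine Finset.sum_congr rfl fun μ _ => ?_
  calc (∑ α, (∑ β, E x μ β * tetMetricInv laminv x β α)
          * (∑ β', tetMetric lam x μ β' * contortion lam laminv x β' α ν))
      = ∑ α, ∑ β, E x μ β * (tetMetricInv laminv x β α
          * (∑ β', tetMetric lam x μ β' * contortion lam laminv x β' α ν)) := by
        refine Finset.sum_congr rfl fun α _ => ?_
        rw [Finset.sum_mul]
        exact Finset.sum_congr rfl fun β _ => by ring
    _ = ∑ β, ∑ α, E x μ β * (tetMetricInv laminv x β α
          * (∑ β', tetMetric lam x μ β' * contortion lam laminv x β' α ν)) := Finset.sum_comm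
    _ = ∑ β, E x μ β * (∑ α, tetMetricInv laminv x β α
          * (∑ β', tetMetric lam x μ β' * contortion lam laminv x β' α ν)) := by
        refine Finset.sum_congr rfl fun β _ => ?_
        rw [Finset.mul_sum]
    _ = - ∑ β, E x μ β * contortion lam laminv x β μ ν := by
        rw [← Finset.sum_neg_distrib]
        refine Finset.sum_congr rfl fun β _ => ?_
        rw [raise lam laminv hlam_diff hlam_inv hlam_inv' x β μ ν]
        ring
end main

/-- the variational identity `E^μ_{ν∥⁻μ} + λ_{iμ∥⁺ν} J_i^μ = 0` with
`J_i^μ = −E^μ_α λ_i^α` implies the PAP differential identity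
`E^μ_{ν∥⁻μ} = (b − 1) E^{μα} γ_{μαν}`. -/
theorem stmt15 {n : ℕ} (hn : 1 ≤ n)
    (lam laminv : Pt n → Fin n → Fin n → ℝ)
    (hlam_diff : ∀ i μ, ContDiff ℝ 1 (fun x => lam x i μ))
    (hlam_inv : ∀ x μ ν, (∑ i, lam x i μ * laminv x i ν) = if μ = ν then (1:ℝ) else 0)
    (hlam_inv' : ∀ x i j, (∑ μ, lam x i μ * laminv x j μ) = if i = j then (1:ℝ) else 0)
    (b : ℝ)
    (E : Tensor2 n)
    (hE_diff : ∀ μ ν, Differentiable ℝ (fun x => E x μ ν))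
    (hvar : ∀ (x : Pt n) (ν : Fin n),
      covDivDual (fun x α μ ν =>
          christoffel (tetMetric lam) (tetMetricInv laminv) x α μ ν
            + b * contortion lam laminv x α μ ν) E ν x
        + (∑ i, ∑ μ,
            (pd (fun y => lam y i μ) ν x
              - ∑ α, lam x i α *
                  (christoffel (tetMetric lam) (tetMetricInv laminv) x α μ ν
                    + b * contortion lam laminv x α μ ν))
            * (-(∑ α, E x μ α * laminv x i α))) = 0)
 :
    ∀ (x : Pt n) (ν : Fin n),
      covDivDual (fun x α μ ν =>
          christoffel (tetMetric lam) (tetMetricInv laminv) x α μ ν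
            + b * contortion lam laminv x α μ ν) E ν x
        = (b - 1) *
            (∑ μ, ∑ α, (∑ β, E x μ β * tetMetricInv laminv x β α)
              * (∑ β, tetMetric lam x μ β * contortion lam laminv x β α ν)) := by
  intro x ν
  have hv := hvar x ν
  rw [S_eq lam laminv hlam_inv hlam_inv' b E x ν] at hv
  rw [T_eq lam laminv hlam_diff hlam_inv hlam_inv' E x ν]
  linear_combination hv
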